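/- arXiv:0705.1911 — 3 statements merged into one kernel-verified Lean document; each statement's English description precedes it below -/
import Mathlib

section
/- Let M : l²(ℤ) → l²(ℤ) be a bounded linear operator given by a bi-infinite matrix (m_{j'j})_{j',j∈ℤ}, i.e. (Mx)_{j'} = Σ_j m_{j'j} x_j. Let δ > 0 and let w : [0,∞) → [0,∞) satisfy w(x) = o(x^{−1−δ}) as x → ∞. If there exists λ > 1 such that |m_{j'j}| < w(λ|j'| − |j|) for all j', j ∈ ℤ with λ|j'| − |j| > 0, then M has no bounded left inverse, i.e. there is no bounded linear operator L : l²(ℤ) → l²(ℤ) with L∘M = Id. -/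
open Filter Finset
open scoped ENNReal


private lemma telescope_sum_inv_sq (s : ℝ) (hs : 2 ≤ s) (n : ℕ) :
    ∑ k ∈ Finset.range n, ((s + k) ^ 2)⁻¹ ≤ (s - 1)⁻¹ := by
  have key : ∀ n : ℕ, ∑ k ∈ Finset.range n, ((s + k) ^ 2)⁻¹ ≤ (s - 1)⁻¹ - (s + n - 1)⁻¹ := by
    intro n
    induction n with
    | zero => simp
    | succ n ih =>
      rw [Finset.sum_range_succ]
      have h1 : (0:ℝ) < s + n - 1 := by
        have : (0:ℝ) ≤ (n:ℝ) := Nat.cast_nonneg n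
        linarith
      have h2 : (0:ℝ) < s + n := by linarith
      have step : ((s + n) ^ 2)⁻¹ ≤ (s + n - 1)⁻¹ - (s + n)⁻¹ := by
        have e : (s + n - 1)⁻¹ - (s + n)⁻¹ = ((s + n - 1) * (s + n))⁻¹ := by
          field_simp
          ring
        rw [e]
        apply inv_anti₀ (mul_pos h1 h2)
        nlinarith
      have e2 : (s + ↑(n + 1) - 1) = s + n := by push_cast; ring
      rw [e2]
      linarith
  have h3 : (0:ℝ) ≤ (s + n - 1)⁻¹ := by
    have : (0:ℝ) ≤ (n:ℝ) := Nat.cast_nonneg n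
    apply inv_nonneg.2; linarith
  linarith [key n]

private lemma sum_natAbs_le (h : ℕ → ℝ) (hh : ∀ i, 0 ≤ h i) (N : ℕ) (s : Finset ℤ)
    (hinj : ∀ x ∈ s, ∀ y ∈ s, x.natAbs = y.natAbs → x = y) (hsub : ∀ x ∈ s, x.natAbs ≤ N) :
    ∑ j ∈ s, h j.natAbs ≤ ∑ i ∈ Finset.range (N + 1), h i := by
  rw [← Finset.sum_image hinj]
  apply Finset.sum_le_sum_of_subset_of_nonneg
  · intro i hi
    rw [Finset.mem_image] at hi
    obtain ⟨j, hj, rfl⟩ := hi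
    rw [Finset.mem_range]
    exact Nat.lt_succ_of_le (hsub j hj)
  · intro i _ _; exact hh i

private lemma int_Icc_sum_le (h : ℕ → ℝ) (hh : ∀ i, 0 ≤ h i) (N : ℕ) :
    ∑ j ∈ Finset.Icc (-(N:ℤ)) (N:ℤ), h j.natAbs ≤ 2 * ∑ i ∈ Finset.range (N + 1), h i := by
  have hsplit : Finset.Icc (-(N:ℤ)) (N:ℤ) = Finset.Icc (-(N:ℤ)) (-1) ∪ Finset.Icc 0 (N:ℤ) := by
    ext j; simp only [Finset.mem_Icc, Finset.mem_union]; omega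
  have hdisj : Disjoint (Finset.Icc (-(N:ℤ)) (-1)) (Finset.Icc 0 (N:ℤ)) := by
    rw [Finset.disjoint_left]; intro j hj hj'
    simp only [Finset.mem_Icc] at hj hj'; omega
  rw [hsplit, Finset.sum_union hdisj, two_mul]
  apply add_le_add
  · apply sum_natAbs_le h hh N
    · intro x hx y hy hxy
      simp only [Finset.mem_Icc] at hx hy; omega
    · intro x hx; simp only [Finset.mem_Icc] at hx; omega
  · apply sum_natAbs_le h hh N
    · intro x hx y hy hxy
      simp only [Finset.mem_Icc] at hx hy; omega
    · intro x hx; simp only [Finset.mem_Icc] at hx; omega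

private lemma tail_sum_bound (δ lam X0 : ℝ) (hδ : 0 < δ) (hlam : 1 < lam)
    (w : ℝ → ℝ)
    (hw1 : ∀ x : ℝ, X0 ≤ x → w x ≤ x ^ (-1 - δ))
    (hw0 : ∀ x : ℝ, 0 ≤ x → 0 ≤ w x)
    (N : ℕ) (hN2 : 2 ≤ (lam - 1) * N) (hNX : X0 ≤ (lam - 1) * N)
    (j' : ℤ) (hj' : (N : ℝ) ≤ |(j' : ℝ)|) :
    ∑ j ∈ Finset.Icc (-(N:ℤ)) (N:ℤ), w (lam * |(j':ℝ)| - |(j:ℝ)|) ^ 2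
      ≤ 4 * (lam - 1) ^ (-(1 + 2*δ)) * |(j':ℝ)| ^ (-(1 + 2*δ)) := by
  have hlam0 : (0:ℝ) < lam - 1 := by linarith
  have hN0 : (0:ℝ) < (N:ℝ) := by nlinarith
  have habs0 : (0:ℝ) < |(j':ℝ)| := lt_of_lt_of_le hN0 hj'
  set s : ℝ := lam * |(j':ℝ)| - N with hs_def
  have hsge : (lam - 1) * |(j':ℝ)| ≤ s := by
    rw [hs_def]; nlinarith
  have hsN : (lam - 1) * (N:ℝ) ≤ s :=
    le_trans (by nlinarith) hsge
  have hs2 : (2:ℝ) ≤ s := le_trans hN2 hsN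
  have hsX : X0 ≤ s := le_trans hNX hsN
  have hs0 : (0:ℝ) < s := by linarith
  -- the auxiliary sequence
  set h : ℕ → ℝ := fun i => ((s + ((N - i : ℕ) : ℝ)) ^ 2)⁻¹ with hh_def
  have hh : ∀ i, 0 ≤ h i := by
    intro i; rw [hh_def]; positivity
  -- pointwise bound
  have hpt : ∀ j ∈ Finset.Icc (-(N:ℤ)) (N:ℤ),
      w (lam * |(j':ℝ)| - |(j:ℝ)|) ^ 2 ≤ s ^ (-(2*δ)) * h j.natAbs := by
    intro j hj
    simp only [Finset.mem_Icc] at hj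
    have hjn : j.natAbs ≤ N := by omega
    have hjabs : |(j:ℝ)| = ((j.natAbs : ℕ) : ℝ) := by
      rw [Nat.cast_natAbs, Int.cast_abs]
    set t : ℝ := lam * |(j':ℝ)| - |(j:ℝ)| with ht_def
    have hts : t = s + ((N - j.natAbs : ℕ) : ℝ) := by
      rw [ht_def, hs_def, hjabs, Nat.cast_sub hjn]; ring
    have hst : s ≤ t := by rw [hts]; have : (0:ℝ) ≤ ((N - j.natAbs : ℕ) : ℝ) := Nat.cast_nonneg _; linarith
    have ht0 : (0:ℝ) < t := lt_of_lt_of_le hs0 hst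
    have hwt : w t ≤ t ^ (-1 - δ) := hw1 t (le_trans hsX hst)
    have hwt0 : 0 ≤ w t := hw0 t ht0.le
    have h1 : w t ^ 2 ≤ (t ^ (-1 - δ)) ^ 2 := pow_le_pow_left₀ hwt0 hwt 2
    have h2 : (t ^ (-1 - δ)) ^ 2 = t ^ (-(2:ℝ)) * t ^ (-(2*δ)) := by
      rw [sq, ← Real.rpow_add ht0, ← Real.rpow_add ht0]
      ring_nf
    have h3 : t ^ (-(2:ℝ)) = (t ^ 2)⁻¹ := by
      rw [show (-(2:ℝ)) = -((2:ℕ):ℝ) by norm_num, Real.rpow_neg ht0.le, Real.rpow_natCast]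
    have h4 : t ^ (-(2*δ)) ≤ s ^ (-(2*δ)) :=
      Real.rpow_le_rpow_of_nonpos hs0 hst (by linarith)
    have h5 : (t ^ 2)⁻¹ = h j.natAbs := by rw [hh_def]; simp only []; rw [← hts]
    calc w t ^ 2 ≤ (t ^ (-1 - δ)) ^ 2 := h1
      _ = t ^ (-(2:ℝ)) * t ^ (-(2*δ)) := h2
      _ ≤ (t^2)⁻¹ * s ^ (-(2*δ)) := by
          rw [h3]; apply mul_le_mul_of_nonneg_left h4 (by positivity)
      _ = s ^ (-(2*δ)) * h j.natAbs := by rw [h5]; ring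
  calc ∑ j ∈ Finset.Icc (-(N:ℤ)) (N:ℤ), w (lam * |(j':ℝ)| - |(j:ℝ)|) ^ 2
      ≤ ∑ j ∈ Finset.Icc (-(N:ℤ)) (N:ℤ), s ^ (-(2*δ)) * h j.natAbs := Finset.sum_le_sum hpt
    _ = s ^ (-(2*δ)) * ∑ j ∈ Finset.Icc (-(N:ℤ)) (N:ℤ), h j.natAbs := by rw [Finset.mul_sum]
    _ ≤ s ^ (-(2*δ)) * (2 * ∑ i ∈ Finset.range (N + 1), h i) := by
        apply mul_le_mul_of_nonneg_left (int_Icc_sum_le h hh N) (Real.rpow_nonneg hs0.le _)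
    _ = s ^ (-(2*δ)) * (2 * ∑ k ∈ Finset.range (N + 1), ((s + k) ^ 2)⁻¹) := by
        congr 1
        congr 1
        rw [← Finset.sum_range_reflect (fun k => ((s + k) ^ 2)⁻¹) (N+1)]
        apply Finset.sum_congr rfl
        intro i hi
        rw [Finset.mem_range] at hi
        simp only [hh_def, Nat.add_sub_cancel]
    _ ≤ s ^ (-(2*δ)) * (2 * (s - 1)⁻¹) := by
        apply mul_le_mul_of_nonneg_left _ (Real.rpow_nonneg hs0.le _)
        apply mul_le_mul_of_nonneg_left (telescope_sum_inv_sq s hs2 (N+1)) (by norm_num)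
    _ ≤ s ^ (-(2*δ)) * (2 * (2 * s⁻¹)) := by
        apply mul_le_mul_of_nonneg_left _ (Real.rpow_nonneg hs0.le _)
        apply mul_le_mul_of_nonneg_left _ (by norm_num)
        have e1 : 2 * s⁻¹ = 2 / s := by rw [div_eq_mul_inv]
        rw [e1, inv_eq_one_div, div_le_div_iff₀ (by linarith) hs0]
        linarith
    _ = 4 * (s⁻¹ * s ^ (-(2*δ))) := by ring
    _ = 4 * s ^ (-(1 + 2*δ)) := by
        rw [show (-(1 + 2*δ)) = (-1) + (-(2*δ)) by ring, Real.rpow_add hs0, Real.rpow_neg_one]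
    _ ≤ 4 * ((lam - 1) * |(j':ℝ)|) ^ (-(1 + 2*δ)) := by
        apply mul_le_mul_of_nonneg_left _ (by norm_num)
        exact Real.rpow_le_rpow_of_nonpos (by positivity) hsge (by linarith)
    _ = 4 * (lam - 1) ^ (-(1 + 2*δ)) * |(j':ℝ)| ^ (-(1 + 2*δ)) := by
        rw [Real.mul_rpow hlam0.le habs0.le]; ring

set_option maxHeartbeats 1000000 in
/-- A bounded operator on `l²(ℤ)` given by a bi-infinite matrix whose
entries decay like `w(λ|j'| - |j|)` below the slanted diagonal `λ|j'| = |j|` (with slope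
`λ > 1` and `w(x) = o(x^{-1-δ})`) has no bounded left inverse. -/
theorem no_bounded_left_inverse_of_slanted_decay_l2_int
    (m : ℤ → ℤ → ℂ)
    (M : lp (fun _ : ℤ => ℂ) 2 →L[ℂ] lp (fun _ : ℤ => ℂ) 2)
    (hM : ∀ x : lp (fun _ : ℤ => ℂ) 2, ∀ j' : ℤ, M x j' = ∑' j : ℤ, m j' j * x j)
    (δ : ℝ) (hδ : 0 < δ)
    (w : ℝ → ℝ) (hw0 : ∀ x : ℝ, 0 ≤ x → 0 ≤ w x)
    (hw : Tendsto (fun x : ℝ => w x / x ^ (-1 - δ)) atTop (nhds 0))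
    (lam : ℝ) (hlam : 1 < lam)
    (hm : ∀ j' j : ℤ, 0 < lam * |(j' : ℝ)| - |(j : ℝ)| →
      ‖m j' j‖ < w (lam * |(j' : ℝ)| - |(j : ℝ)|)) :
    ¬ ∃ L : lp (fun _ : ℤ => ℂ) 2 →L[ℂ] lp (fun _ : ℤ => ℂ) 2,
      L.comp M = ContinuousLinearMap.id ℂ (lp (fun _ : ℤ => ℂ) 2) := by
  classical
  rintro ⟨L, hL⟩
  set c : ℝ := ‖L‖ with hc
  have hLM : ∀ x : lp (fun _ : ℤ => ℂ) 2, ‖x‖ ≤ c * ‖M x‖ := by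
    intro x
    have h1 : L (M x) = x := by
      have := congrFun (congrArg DFunLike.coe hL) x
      simpa using this
    calc ‖x‖ = ‖L (M x)‖ := by rw [h1]
      _ ≤ c * ‖M x‖ := L.le_opNorm _
  have hlam0 : (0:ℝ) < lam - 1 := by linarith
  have hδ2 : (1:ℝ) < 1 + 2 * δ := by linarith
  -- extract the decay threshold X0
  obtain ⟨X0, hX0⟩ : ∃ X0 : ℝ, ∀ x : ℝ, X0 ≤ x → w x ≤ x ^ (-1 - δ) := by
    have h1 : ∀ᶠ x : ℝ in atTop, w x / x ^ (-1 - δ) < 1 :=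
      hw.eventually_lt_const one_pos |>.mono (fun x hx => hx) |>.mono (fun x hx => hx)
    have h2 : ∀ᶠ x : ℝ in atTop, (1:ℝ) ≤ x := eventually_ge_atTop 1
    have h3 : ∀ᶠ x : ℝ in atTop, w x ≤ x ^ (-1 - δ) := by
      filter_upwards [h1, h2] with x hx1 hx2
      have hp : (0:ℝ) < x ^ (-1 - δ) := Real.rpow_pos_of_pos (by linarith) _
      have := (div_lt_one hp).1 hx1
      linarith
    obtain ⟨X0, hX0⟩ := eventually_atTop.1 h3
    exact ⟨X0, hX0⟩
  -- the summable majorant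
  set c₀ : ℝ := 4 * (lam - 1) ^ (-(1 + 2*δ)) with hc₀
  have hc₀0 : 0 ≤ c₀ := by
    apply mul_nonneg (by norm_num) (Real.rpow_nonneg hlam0.le _)
  set G : ℤ → ℝ := fun j => c₀ * |(j:ℝ)| ^ (-(1 + 2*δ)) with hG
  have hG0 : ∀ j, 0 ≤ G j := fun j =>
    mul_nonneg hc₀0 (Real.rpow_nonneg (abs_nonneg _) _)
  have hGsum : Summable G := (Real.summable_abs_int_rpow hδ2).mul_left c₀
  -- pick the tail cutoff finset
  set ε : ℝ := (c ^ 2 + 1)⁻¹ with hε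
  have hεpos : 0 < ε := by positivity
  have htail := tendsto_tsum_compl_atTop_zero G
  have hev : ∀ᶠ t : Finset ℤ in atTop, ∑' (a : {x : ℤ // x ∉ t}), G ↑a < ε :=
    (tendsto_order.1 htail).2 ε hεpos
  obtain ⟨s₀, hs₀⟩ := eventually_atTop.1 hev
  set K : ℕ := s₀.sup Int.natAbs with hK
  have hKmem : ∀ j ∈ s₀, j.natAbs ≤ K := fun j hj => Finset.le_sup hj
  -- choose N
  obtain ⟨N₁, hN₁⟩ := exists_nat_ge (max X0 2 / (lam - 1))
  set N : ℕ := max N₁ (K + 1) with hN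
  have hNK : K + 1 ≤ N := le_max_right _ _
  have hN1 : 1 ≤ N := le_trans (by omega) hNK
  have hNX : max X0 2 ≤ (lam - 1) * N := by
    have h1 : max X0 2 ≤ (lam - 1) * N₁ := by
      rw [div_le_iff₀ hlam0] at hN₁; linarith [hN₁]
    have h2 : (N₁ : ℝ) ≤ (N : ℝ) := by exact_mod_cast le_max_left N₁ (K + 1)
    nlinarith
  have hN2' : (2:ℝ) ≤ (lam - 1) * N := le_trans (le_max_right _ _) hNX
  have hNX' : X0 ≤ (lam - 1) * N := le_trans (le_max_left _ _) hNX
  set A : Finset ℤ := Finset.Icc (-(N:ℤ)) (N:ℤ) with hA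
  set B : Finset ℤ := Finset.Icc (-(N:ℤ) + 1) ((N:ℤ) - 1) with hB
  have hs₀B : s₀ ⊆ B := by
    intro j hj
    have := hKmem j hj
    simp only [hB, Finset.mem_Icc]
    omega
  have htailB : ∑' (a : {x : ℤ // x ∉ B}), G ↑a < ε := hs₀ B hs₀B
  -- cardinalities
  have hA_card : A.card = 2 * N + 1 := by
    rw [hA, Int.card_Icc]; omega
  have hB_card : B.card = 2 * N - 1 := by
    rw [hB, Int.card_Icc]; omega
  -- the finite-dimensional kernel element
  set φ : (↥A → ℂ) →ₗ[ℂ] (↥B → ℂ) :=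
    Matrix.mulVecLin (fun (j' : ↥B) (j : ↥A) => m ↑j' ↑j) with hφ
  have hφni : ¬ Function.Injective φ := by
    intro hinj
    have hle := LinearMap.finrank_le_finrank_of_injective hinj
    rw [Module.finrank_fintype_fun_eq_card, Module.finrank_fintype_fun_eq_card,
      Fintype.card_coe, Fintype.card_coe, hA_card, hB_card] at hle
    omega
  obtain ⟨u, v, huv, hne⟩ := Function.not_injective_iff.1 hφni
  set a : ↥A → ℂ := u - v with ha
  have ha0 : φ a = 0 := by rw [ha, map_sub, huv, sub_self]
  have hane : a ≠ 0 := sub_ne_zero.2 hne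
  obtain ⟨i0, hi0⟩ : ∃ i, a i ≠ 0 := by
    by_contra h; push_neg at h; exact hane (funext h)
  -- the test vector
  set xf : ℤ → ℂ := fun j => if h : j ∈ A then a ⟨j, h⟩ else 0 with hxf
  have hxf_off : ∀ j ∉ A, xf j = 0 := by
    intro j hj; simp only [hxf, dif_neg hj]
  have ptwo : (0:ℝ) < (2 : ℝ≥0∞).toReal := by norm_num
  have hxmem : Memℓp xf 2 := by
    apply memℓp_gen
    apply summable_of_ne_finset_zero (s := A)
    intro j hj
    rw [hxf_off j hj]
    simp only [norm_zero]
    rw [Real.zero_rpow ptwo.ne']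
  set x : lp (fun _ : ℤ => ℂ) 2 := ⟨xf, hxmem⟩ with hx
  have hx_coe : ∀ j : ℤ, x j = xf j := fun _ => rfl
  -- squared-norm identity
  have key : ∀ y : lp (fun _ : ℤ => ℂ) 2, ‖y‖ ^ 2 = ∑' i, ‖y i‖ ^ 2 := by
    intro y
    have h1 := lp.norm_rpow_eq_tsum (p := 2) ptwo y
    rw [show ((2:ℝ≥0∞).toReal) = ((2:ℕ):ℝ) by norm_num] at h1
    simpa [Real.rpow_natCast] using h1
  have hQsum : Summable (fun j' : ℤ => ‖M x j'‖ ^ 2) := by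
    have h1 := (lp.memℓp (M x)).summable ptwo
    rw [show ((2:ℝ≥0∞).toReal) = ((2:ℕ):ℝ) by norm_num] at h1
    simpa [Real.rpow_natCast] using h1
  set P : ℝ := ∑ j ∈ A, ‖xf j‖ ^ 2 with hP
  have hxnorm : ‖x‖ ^ 2 = P := by
    rw [key x, hP]
    apply tsum_eq_sum
    intro j hj
    rw [hx_coe, hxf_off j hj, norm_zero]
    norm_num
  have hPpos : 0 < P := by
    rw [hP]
    apply Finset.sum_pos' (fun j _ => by positivity)
    refine ⟨↑i0, i0.2, ?_⟩
    have : xf ↑i0 = a i0 := by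
      simp only [hxf, dif_pos i0.2]
    rw [this]
    exact pow_pos (norm_pos_iff.mpr hi0) 2
  -- the matrix form of M x
  have hMx : ∀ j' : ℤ, M x j' = ∑ j ∈ A, m j' j * xf j := by
    intro j'
    rw [hM x j']
    apply tsum_eq_sum
    intro j hj
    rw [hx_coe, hxf_off j hj, mul_zero]
  have hMxφ : ∀ j' : ℤ, M x j' = ∑ j : ↥A, m j' ↑j * a j := by
    intro j'
    rw [hMx j', ← Finset.sum_attach A fun j => m j' j * xf j, Finset.univ_eq_attach]
    apply Finset.sum_congr rfl
    intro j _
    congr 1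
    simp only [hxf, dif_pos j.2]
  have hMxB : ∀ j' ∈ B, M x j' = 0 := by
    intro j' hj'
    rw [hMxφ j']
    have := congrFun ha0 ⟨j', hj'⟩
    change (∑ j : ↥A, m j' ↑j * a j) = 0 at this
    simpa [hφ, Matrix.mulVecLin_apply, Matrix.mulVec, dotProduct] using this
  -- pointwise tail bound
  set GG : ℤ → ℝ := Set.indicator {x : ℤ | x ∉ B} G with hGG
  have hterm : ∀ j' : ℤ, ‖M x j'‖ ^ 2 ≤ GG j' * P := by
    intro j'
    by_cases hj' : j' ∈ B
    · rw [hMxB j' hj']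
      simp [hGG, Set.indicator_apply, hj']
    · rw [hGG, Set.indicator_apply, if_pos (by simpa using hj')]
      have hj'N : (N:ℝ) ≤ |(j':ℝ)| := by
        have h1 : N ≤ j'.natAbs := by
          simp only [hB, Finset.mem_Icc] at hj'
          omega
        have h2 : ((N:ℕ):ℝ) ≤ ((j'.natAbs:ℕ):ℝ) := Nat.cast_le.2 h1
        rwa [Nat.cast_natAbs, Int.cast_abs] at h2
      have h1 : ‖M x j'‖ ≤ ∑ j ∈ A, ‖m j' j‖ * ‖xf j‖ := by
        rw [hMx j']
        refine le_trans (norm_sum_le _ _) ?_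
        apply Finset.sum_le_sum
        intro j _
        rw [norm_mul]
      have h2 : ‖M x j'‖ ^ 2 ≤ (∑ j ∈ A, ‖m j' j‖ * ‖xf j‖) ^ 2 :=
        pow_le_pow_left₀ (norm_nonneg _) h1 2
      have hCS : (∑ j ∈ A, ‖m j' j‖ * ‖xf j‖) ^ 2 ≤
          (∑ j ∈ A, ‖m j' j‖ ^ 2) * (∑ j ∈ A, ‖xf j‖ ^ 2) :=
        Finset.sum_mul_sq_le_sq_mul_sq A _ _
      have hwb : ∑ j ∈ A, ‖m j' j‖ ^ 2 ≤
          ∑ j ∈ A, w (lam * |(j':ℝ)| - |(j:ℝ)|) ^ 2 := by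
        apply Finset.sum_le_sum
        intro j hj
        have hjN : |(j:ℝ)| ≤ (N:ℝ) := by
          have h1 : j.natAbs ≤ N := by
            simp only [hA, Finset.mem_Icc] at hj
            omega
          have h2 : ((j.natAbs:ℕ):ℝ) ≤ ((N:ℕ):ℝ) := Nat.cast_le.2 h1
          rwa [Nat.cast_natAbs, Int.cast_abs] at h2
        have htpos : 0 < lam * |(j':ℝ)| - |(j:ℝ)| := by nlinarith
        have := hm j' j htpos
        apply pow_le_pow_left₀ (norm_nonneg _)
        exact this.le
      have htailb := tail_sum_bound δ lam X0 hδ hlam w hX0 hw0 N hN2' hNX' j' hj'N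
      calc ‖M x j'‖ ^ 2 ≤ (∑ j ∈ A, ‖m j' j‖ ^ 2) * (∑ j ∈ A, ‖xf j‖ ^ 2) :=
            le_trans h2 hCS
        _ ≤ G j' * P := by
            rw [hP]
            apply mul_le_mul_of_nonneg_right _ (Finset.sum_nonneg fun j _ => by positivity)
            exact le_trans hwb (by rw [hG, hc₀]; exact_mod_cast htailb)
  -- summability of the majorant
  have hGGsum : Summable GG := by
    apply Summable.of_nonneg_of_le _ _ hGsum
    · intro j'; by_cases h : j' ∈ B <;> simp [hGG, Set.indicator_apply, h, hG0 j']
    · intro j'; by_cases h : j' ∈ B <;> simp [hGG, Set.indicator_apply, h, hG0 j']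
  -- sum up
  have hQle : ∑' j', ‖M x j'‖ ^ 2 ≤ (∑' j', GG j') * P := by
    rw [← tsum_mul_right]
    exact Summable.tsum_le_tsum hterm hQsum (hGGsum.mul_right P)
  have hGGeq : ∑' j', GG j' = ∑' (a : {x : ℤ // x ∉ B}), G ↑a := by
    rw [hGG]
    exact (_root_.tsum_subtype {x : ℤ | x ∉ B} G).symm
  have hT0 : 0 ≤ ∑' j', GG j' := tsum_nonneg (fun j' => by
    by_cases h : j' ∈ B <;> simp [hGG, Set.indicator_apply, h, hG0 j'])
  have hTε : ∑' j', GG j' < ε := by rw [hGGeq]; exact htailB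
  -- final contradiction
  have hMxnorm : ‖M x‖ ^ 2 = ∑' j', ‖M x j'‖ ^ 2 := key (M x)
  have hsq : ‖x‖ ^ 2 ≤ c ^ 2 * ‖M x‖ ^ 2 := by
    have := pow_le_pow_left₀ (norm_nonneg x) (hLM x) 2
    rwa [mul_pow] at this
  have hfin : P ≤ c ^ 2 * ((∑' j', GG j') * P) := by
    calc P = ‖x‖ ^ 2 := hxnorm.symm
      _ ≤ c ^ 2 * ‖M x‖ ^ 2 := hsq
      _ = c ^ 2 * ∑' j', ‖M x j'‖ ^ 2 := by rw [hMxnorm]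
      _ ≤ c ^ 2 * ((∑' j', GG j') * P) := mul_le_mul_of_nonneg_left hQle (sq_nonneg c)
  have hcε : c ^ 2 * (∑' j', GG j') < 1 := by
    have hcp : (0:ℝ) < c ^ 2 + 1 := by positivity
    calc c ^ 2 * (∑' j', GG j') ≤ c ^ 2 * ε :=
          mul_le_mul_of_nonneg_left hTε.le (sq_nonneg c)
      _ < 1 := by
          rw [hε, ← div_eq_mul_inv, div_lt_one hcp]
          nlinarith
  nlinarith [hfin, hcε, hPpos, hT0, sq_nonneg c]
end

section
/- Let M : l²(ℤ) → l²(ℤ) be a bounded linear operator given by a bi-infinite matrix (m_{j'j})_{j',j∈ℤ}, i.e. (Mx)_{j'} = Σ_j m_{j'j} x_j. Let δ > 0 and let w : [0,∞) → [0,∞) satisfy w(x) = o(x^{−1−δ}) as x → ∞. If there exists 0 < λ < 1 such that |m_{j'j}| < w(−λ|j'| + |j|) for all j', j ∈ ℤ with −λ|j'| + |j| > 0, then M has no bounded right inverse, i.e. there is no bounded linear operator R : l²(ℤ) → l²(ℤ) with M∘R = Id. -/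
open Filter
open scoped ComplexConjugate InnerProductSpace ENNReal NNReal

set_option maxHeartbeats 1000000 in
/-- A bounded operator on `l²(ℤ)` given by a bi-infinite matrix whose
entries decay like `w(-λ|j'| + |j|)` above the slanted diagonal `λ|j'| = |j|` (with slope
`0 < λ < 1` and `w(x) = o(x^{-1-δ})`) has no bounded right inverse. -/
theorem no_bounded_right_inverse_of_slanted_decay_l2_int
    (m : ℤ → ℤ → ℂ)
    (M : lp (fun _ : ℤ => ℂ) 2 →L[ℂ] lp (fun _ : ℤ => ℂ) 2)
    (hM : ∀ x : lp (fun _ : ℤ => ℂ) 2, ∀ j' : ℤ, M x j' = ∑' j : ℤ, m j' j * x j)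
    (δ : ℝ) (hδ : 0 < δ)
    (w : ℝ → ℝ) (hw0 : ∀ x : ℝ, 0 ≤ x → 0 ≤ w x)
    (hw : Tendsto (fun x : ℝ => w x / x ^ (-1 - δ)) atTop (nhds 0))
    (lam : ℝ) (hlam0 : 0 < lam) (hlam : lam < 1)
    (hm : ∀ j' j : ℤ, 0 < -lam * |(j' : ℝ)| + |(j : ℝ)| →
      ‖m j' j‖ < w (-lam * |(j' : ℝ)| + |(j : ℝ)|)) :
    ¬ ∃ R : lp (fun _ : ℤ => ℂ) 2 →L[ℂ] lp (fun _ : ℤ => ℂ) 2,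
      M.comp R = ContinuousLinearMap.id ℂ (lp (fun _ : ℤ => ℂ) 2) := by
  rintro ⟨R, hR⟩
  have hRy : ∀ g : lp (fun _ : ℤ => ℂ) 2, M (R g) = g := by
    intro g
    have := ContinuousLinearMap.ext_iff.mp hR g
    simpa using this
  -- matrix entries as images of basis vectors
  have hme : ∀ j' j : ℤ, (M (lp.single 2 j (1:ℂ))) j' = m j' j := by
    intro j' j
    rw [hM]
    rw [tsum_eq_single j (fun k hk => by
      rw [lp.single_apply_ne 2 j _ hk, mul_zero])]
    rw [lp.single_apply_self, mul_one]
  -- the bound from w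
  have h1 : ∀ᶠ x : ℝ in atTop, w x / x ^ (-1 - δ) < 1 := hw.eventually_lt_const one_pos
  obtain ⟨X₀, hX₀⟩ := eventually_atTop.mp h1
  set X₁ : ℝ := max X₀ 1 with hX₁def
  have hwle : ∀ t : ℝ, X₁ ≤ t → w t ≤ t ^ (-1 - δ) := by
    intro t ht
    have ht1 : (1:ℝ) ≤ t := le_trans (le_max_right _ _) ht
    have htpos : 0 < t := lt_of_lt_of_le one_pos ht1
    have hp : 0 < t ^ (-1 - δ) := Real.rpow_pos_of_pos htpos _
    have := hX₀ t (le_trans (le_max_left _ _) ht)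
    exact le_of_lt ((div_lt_one hp).mp this)
  set C : ℝ := ‖R‖ with hCdef
  have hC0 : 0 ≤ C := norm_nonneg R
  set a : ℝ := 1 - lam with hadef
  have ha : 0 < a := by simp [hadef]; linarith
  set ρ : ℝ := a / (12 * C^2 + 1) with hρdef
  have hρ : 0 < ρ := by positivity
  -- choose N
  have hAN : Tendsto (fun n : ℕ => a * n) atTop atTop :=
    (tendsto_natCast_atTop_atTop (R := ℝ)).const_mul_atTop ha
  have hev : ∀ᶠ N : ℕ in atTop,
      1 ≤ N ∧ 2 ≤ a * N ∧ X₁ ≤ a * N ∧ (a * N) ^ (-(2*δ)) < ρ := by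
    refine (eventually_ge_atTop 1).and ((hAN.eventually_ge_atTop 2).and
      ((hAN.eventually_ge_atTop X₁).and ?_))
    exact ((tendsto_rpow_neg_atTop (by linarith : (0:ℝ) < 2*δ)).comp hAN).eventually_lt_const hρ
  obtain ⟨N, hN1, hKr2, hKrX, hKrρ⟩ := hev.exists
  set Kr : ℝ := a * N with hKrdef
  have hKr1 : (1:ℝ) < Kr := by linarith
  have hKr0 : (0:ℝ) < Kr := by linarith
  have hNR : (1:ℝ) ≤ (N:ℝ) := by exact_mod_cast hN1
  set q : ℝ := Kr ^ (-(2*δ)) with hqdef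
  have hq0 : 0 ≤ q := Real.rpow_nonneg hKr0.le _
  set D : ℝ := (2*(N:ℝ)+1) * q with hDdef
  have hD0 : 0 ≤ D := by positivity
  set εsq : ℝ := 2 * (D * (Kr - 1)⁻¹) with hεdef
  have hinvnn : (0:ℝ) ≤ (Kr-1)⁻¹ := inv_nonneg.mpr (by linarith)
  have hε0 : 0 ≤ εsq := by
    rw [hεdef]
    exact mul_nonneg (by norm_num) (mul_nonneg hD0 hinvnn)
  -- smallness of εsq * C^2
  have hsmall : εsq * C^2 < 1 := by
    have hKr1' : (0:ℝ) < Kr - 1 := by linarith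
    have e1 : (Kr - 1)⁻¹ ≤ 2 / Kr := by
      rw [inv_le_iff_one_le_mul₀ hKr1', div_mul_eq_mul_div, le_div_iff₀ hKr0]
      nlinarith
    have e2 : (2*(N:ℝ)+1) ≤ 3 * N := by linarith
    have step : εsq * C^2 ≤ 2 * ((3*(N:ℝ)) * ρ) * (2 / Kr) * C^2 := by
      have hqρ : q ≤ ρ := le_of_lt hKrρ
      calc εsq * C^2 = 2 * ((2*(N:ℝ)+1) * q) * (Kr-1)⁻¹ * C^2 := by
            rw [hεdef, hDdef]; ring
        _ ≤ 2 * ((3*(N:ℝ)) * ρ) * (2 / Kr) * C^2 := by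
            gcongr <;> first | positivity | exact e1 | exact hqρ | linarith
    have hfin : 2 * ((3*(N:ℝ)) * ρ) * (2 / Kr) * C^2 = 12 * C^2 / (12 * C^2 + 1) := by
      rw [hρdef, hKrdef]
      have hN0 : (N:ℝ) ≠ 0 := by linarith
      have ha0 : a ≠ 0 := ne_of_gt ha
      have h12 : (12 * C^2 + 1) ≠ 0 := by positivity
      field_simp
      ring
    rw [hfin] at step
    have : 12 * C^2 / (12 * C^2 + 1) < 1 := by
      rw [div_lt_one (by positivity)]; linarith
    linarith
  -- index sets
  set I : Finset ℤ := Finset.Icc (-(N:ℤ)) N with hIdef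
  set J : Finset ℤ := Finset.Icc (-(N:ℤ)+1) ((N:ℤ)-1) with hJdef
  have hcardI : I.card = 2*N+1 := by rw [hIdef, Int.card_Icc]; omega
  have hcardJ : J.card = 2*N-1 := by rw [hJdef, Int.card_Icc]; omega
  have hJmem : ∀ j : ℤ, j ∈ J ↔ j.natAbs < N := by
    intro j; rw [hJdef]; simp only [Finset.mem_Icc]; omega
  -- kernel vector
  have hLnotinj : ∀ L : (↥I → ℂ) →ₗ[ℂ] (↥J → ℂ), ¬ Function.Injective L := by
    intro L hinj
    have := LinearMap.finrank_le_finrank_of_injective hinj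
    rw [Module.finrank_pi, Module.finrank_pi, Fintype.card_coe, Fintype.card_coe,
      hcardI, hcardJ] at this
    omega
  set L : (↥I → ℂ) →ₗ[ℂ] (↥J → ℂ) :=
    { toFun := fun v j => ∑ j' : ↥I, v j' * m (j' : ℤ) (j : ℤ),
      map_add' := by
        intro u v; funext j
        simp [add_mul, Finset.sum_add_distrib]
      map_smul' := by
        intro c v; funext j
        simp [Finset.mul_sum, mul_assoc] } with hLdef
  obtain ⟨v₁, v₂, hv12, hvne⟩ := Function.not_injective_iff.mp (hLnotinj L)
  set v : ↥I → ℂ := v₁ - v₂ with hvdef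
  have hv0 : v ≠ 0 := sub_ne_zero.mpr hvne
  have hLv : L v = 0 := by rw [hvdef, map_sub, hv12, sub_self]
  -- extension to ℤ
  set V : ℤ → ℂ := fun k => if h : k ∈ I then v ⟨k, h⟩ else 0 with hVdef
  have hVout : ∀ k : ℤ, k ∉ I → V k = 0 := by
    intro k hk; rw [hVdef]; exact dif_neg hk
  have hVin : ∀ (k : ℤ) (hk : k ∈ I), V k = v ⟨k, hk⟩ := by
    intro k hk; rw [hVdef]; exact dif_pos hk
  have hVne : ∃ k, V k ≠ 0 := by
    obtain ⟨i, hi⟩ := Function.ne_iff.mp hv0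
    refine ⟨(i : ℤ), ?_⟩
    rw [hVin _ i.2]
    simpa using hi
  have hker : ∀ j : ℤ, j ∈ J → ∑ j' ∈ I, V j' * m j' j = 0 := by
    intro j hj
    have h0 := congrFun hLv ⟨j, hj⟩
    simp only [hLdef, LinearMap.coe_mk, AddHom.coe_mk, Pi.zero_apply] at h0
    calc ∑ j' ∈ I, V j' * m j' j
        = ∑ j' ∈ I.attach, V (j' : ℤ) * m (j' : ℤ) j := (Finset.sum_attach I _).symm
      _ = ∑ j' ∈ I.attach, v j' * m (j' : ℤ) j := by
          refine Finset.sum_congr rfl fun j' _ => ?_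
          rw [hVin _ j'.2]
      _ = 0 := by rw [← Finset.univ_eq_attach]; exact h0
  -- the test vector y
  set y : lp (fun _ : ℤ => ℂ) 2 := ∑ j' ∈ I, lp.single 2 j' (conj (V j')) with hydef
  have hycoord : ∀ k : ℤ, (y : ℤ → ℂ) k = conj (V k) := by
    intro k
    rw [hydef]
    simp only [lp.coeFn_sum, Finset.sum_apply, lp.single_apply, Pi.single_apply, Finset.sum_ite_eq, Finset.sum_ite_eq']
    split_ifs with h
    · rfl
    · rw [hVout k h, map_zero]
  have hy0 : y ≠ 0 := by
    obtain ⟨k, hk⟩ := hVne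
    intro h
    apply hk
    have : (y : ℤ → ℂ) k = 0 := by rw [h]; rfl
    rw [hycoord k] at this
    simpa using this
  have hynorm : 0 < ‖y‖ := norm_pos_iff.mpr hy0
  -- norm of y squared
  set Sv : ℝ := ∑ j' ∈ I, ‖V j'‖^2 with hSvdef
  have htR : ((2:ℝ≥0∞).toReal) = ((2:ℕ):ℝ) := by norm_num
  have hySv : ‖y‖^2 = Sv := by
    have := lp.norm_sum_single (p := 2) (by norm_num) (fun k => conj (V k)) I
    rw [htR] at this
    simp only [Real.rpow_natCast] at this
    rw [hydef, hSvdef]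
    rw [this]
    refine Finset.sum_congr rfl fun j' _ => ?_
    rw [RCLike.norm_conj]
  -- the adjoint applied to y, coordinates
  set A : lp (fun _ : ℤ => ℂ) 2 →L[ℂ] lp (fun _ : ℤ => ℂ) 2 := ContinuousLinearMap.adjoint M with hAdef
  set c : ℤ → ℂ := fun j => ∑ j' ∈ I, V j' * m j' j with hcdef
  have hAcoord : ∀ j : ℤ, (A y : ℤ → ℂ) j = conj (c j) := by
    intro j
    have h0 : (A y : ℤ → ℂ) j = ⟪lp.single 2 j (1:ℂ), A y⟫_ℂ := by
      rw [lp.inner_single_left]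
      simp [RCLike.inner_apply]
    rw [h0, hAdef, ContinuousLinearMap.adjoint_inner_right, lp.inner_eq_tsum]
    have hout : ∀ j' ∉ I, ⟪(M (lp.single 2 j (1:ℂ)) : ℤ → ℂ) j', (y : ℤ → ℂ) j'⟫_ℂ = 0 := by
      intro j' hj'
      rw [hycoord j', hVout j' hj', map_zero, inner_zero_right]
    rw [tsum_eq_sum hout, hcdef, map_sum]
    refine Finset.sum_congr rfl fun j' _ => ?_
    rw [RCLike.inner_apply, hme j' j, hycoord j', map_mul, mul_comm]
  -- telescoping sum u
  set u : ℕ → ℝ := fun k => ((Kr - 1 + k) * (Kr + k))⁻¹ with hudef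
  have hu0 : ∀ k, 0 ≤ u k := by
    intro k
    have h1 : (0:ℝ) < Kr - 1 + k := by
      have : (0:ℝ) ≤ k := Nat.cast_nonneg k
      linarith
    have h2 : (0:ℝ) < Kr + k := by
      have : (0:ℝ) ≤ k := Nat.cast_nonneg k
      linarith
    positivity
  set aa : ℕ → ℝ := fun k => (Kr - 1 + k)⁻¹ with haadef
  have haa0 : ∀ k, 0 ≤ aa k := by
    intro k
    have : (0:ℝ) ≤ k := Nat.cast_nonneg k
    have : (0:ℝ) < Kr - 1 + k := by linarith
    positivity
  have hue : ∀ k, u k = aa k - aa (k+1) := by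
    intro k
    have hk0 : (0:ℝ) ≤ k := Nat.cast_nonneg k
    have h1 : (0:ℝ) < Kr - 1 + k := by linarith
    have h2 : (0:ℝ) < Kr + k := by linarith
    rw [hudef, haadef]
    push_cast
    rw [eq_sub_iff_add_eq]
    rw [show Kr - 1 + ((k:ℝ) + 1) = Kr + k by ring]
    field_simp
    ring
  have hupartial : ∀ n, ∑ i ∈ Finset.range n, u i ≤ (Kr - 1)⁻¹ := by
    intro n
    have : ∑ i ∈ Finset.range n, (aa i - aa (i+1)) = aa 0 - aa n :=
      Finset.sum_range_sub' aa n
    calc ∑ i ∈ Finset.range n, u i = aa 0 - aa n := by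
          rw [← this]; exact Finset.sum_congr rfl fun i _ => hue i
      _ ≤ aa 0 := by have := haa0 n; linarith
      _ = (Kr - 1)⁻¹ := by rw [haadef]; norm_num
  have husum : Summable u := summable_of_sum_range_le hu0 hupartial
  have hutsum : ∑' k, u k ≤ (Kr - 1)⁻¹ := Real.tsum_le_of_sum_range_le hu0 hupartial
  -- pointwise matrix-entry estimate above the diagonal
  have est1 : ∀ j' ∈ I, ∀ j : ℤ, N ≤ j.natAbs → ‖m j' j‖^2 ≤ q * u (j.natAbs - N) := by
    intro j' hj' j hj
    set t : ℝ := -lam * |(j' : ℝ)| + |(j : ℝ)| with htdef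
    set k : ℕ := j.natAbs - N with hkdef
    have hnat : j.natAbs = N + k := by omega
    have habsj : |(j : ℝ)| = (N : ℝ) + k := by
      have h : |j| = (N : ℤ) + k := by rw [Int.abs_eq_natAbs]; omega
      rw [← Int.cast_abs, h]
      push_cast
      ring
    have habsj' : |(j' : ℝ)| ≤ (N : ℝ) := by
      rw [hIdef, Finset.mem_Icc] at hj'
      have : |j'| ≤ (N : ℤ) := abs_le.mpr hj'
      calc |(j' : ℝ)| = ((|j'| : ℤ) : ℝ) := by rw [Int.cast_abs]
        _ ≤ ((N:ℤ) : ℝ) := by exact_mod_cast this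
        _ = (N : ℝ) := by push_cast; ring
    have hk0 : (0:ℝ) ≤ k := Nat.cast_nonneg k
    have ht1 : Kr + k ≤ t := by
      rw [htdef, habsj, hKrdef, hadef]
      nlinarith [habsj']
    have htK : Kr ≤ t := by linarith
    have ht0 : 0 < t := by linarith
    have hmw : ‖m j' j‖ < w t := hm j' j ht0
    have hwt : w t ≤ t ^ (-1 - δ) := hwle t (le_trans hKrX htK)
    have hmn : ‖m j' j‖ ≤ t ^ (-1 - δ) := by
      exact le_trans hmw.le hwt
    have hmn2 : ‖m j' j‖^2 ≤ (t ^ (-1 - δ))^2 :=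
      pow_le_pow_left₀ (norm_nonneg _) hmn 2
    have hrw : (t ^ (-1 - δ))^2 = t ^ (-(2*δ)) * t ^ (-2 : ℝ) := by
      rw [← Real.rpow_natCast (t ^ (-1 - δ)) 2, ← Real.rpow_mul ht0.le, ← Real.rpow_add ht0]
      norm_num
      ring_nf
    have hb1 : t ^ (-(2*δ)) ≤ q := by
      rw [hqdef]
      exact Real.rpow_le_rpow_of_nonpos hKr0 htK (by linarith)
    have hb2 : t ^ (-2 : ℝ) ≤ u k := by
      have h3 : (0:ℝ) < Kr - 1 + k := by linarith
      have h4 : (0:ℝ) < Kr + k := by linarith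
      have h2 : t ^ (-2 : ℝ) = (t^2)⁻¹ := by
        rw [show (-2:ℝ) = -((2:ℕ):ℝ) by norm_num, Real.rpow_neg ht0.le, Real.rpow_natCast]
      have h5 : Kr - 1 + (k:ℝ) ≤ t := by linarith
      have h7 : (0:ℝ) ≤ t := by linarith
      have h8 : (Kr - 1 + (k:ℝ)) * (Kr + (k:ℝ)) ≤ t^2 := by
        rw [pow_two]
        exact mul_le_mul h5 ht1 h4.le h7
      calc t ^ (-2:ℝ) = (t^2)⁻¹ := h2
        _ ≤ u k := by
            simp only [hudef]
            exact inv_anti₀ (mul_pos h3 h4) h8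
    calc ‖m j' j‖^2 ≤ (t ^ (-1 - δ))^2 := hmn2
      _ = t ^ (-(2*δ)) * t ^ (-2 : ℝ) := hrw
      _ ≤ q * u k := by
          apply mul_le_mul hb1 hb2 (Real.rpow_nonneg ht0.le _) hq0
  -- Cauchy-Schwarz estimate for the coefficients
  have hSv0 : 0 ≤ Sv := Finset.sum_nonneg fun i _ => sq_nonneg _
  have est2 : ∀ j : ℤ, N ≤ j.natAbs → ‖c j‖^2 ≤ Sv * (D * u (j.natAbs - N)) := by
    intro j hj
    have h1 : ‖c j‖ ≤ ∑ j' ∈ I, ‖V j'‖ * ‖m j' j‖ := by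
      rw [hcdef]
      refine le_trans (norm_sum_le _ _) ?_
      exact le_of_eq (Finset.sum_congr rfl fun j' _ => norm_mul _ _)
    have h2 : (∑ j' ∈ I, ‖V j'‖ * ‖m j' j‖)^2 ≤
        (∑ j' ∈ I, ‖V j'‖^2) * ∑ j' ∈ I, ‖m j' j‖^2 :=
      Finset.sum_mul_sq_le_sq_mul_sq I _ _
    have h3 : ∑ j' ∈ I, ‖m j' j‖^2 ≤ D * u (j.natAbs - N) := by
      have h4 : ∑ j' ∈ I, ‖m j' j‖^2 ≤ I.card • (q * u (j.natAbs - N)) :=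
        Finset.sum_le_card_nsmul I _ _ (fun j' hj' => est1 j' hj' j hj)
      rw [hcardI, nsmul_eq_mul] at h4
      refine le_trans h4 (le_of_eq ?_)
      rw [hDdef]
      push_cast
      ring
    have h5 : ‖c j‖^2 ≤ (∑ j' ∈ I, ‖V j'‖ * ‖m j' j‖)^2 :=
      pow_le_pow_left₀ (norm_nonneg _) h1 2
    calc ‖c j‖^2 ≤ (∑ j' ∈ I, ‖V j'‖^2) * ∑ j' ∈ I, ‖m j' j‖^2 := le_trans h5 h2
      _ ≤ Sv * (D * u (j.natAbs - N)) := by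
          rw [← hSvdef]
          exact mul_le_mul_of_nonneg_left h3 hSv0
  -- summable majorant over ℤ
  set G : ℕ → ℝ := fun n => if n < N then 0 else D * u (n - N) with hGdef
  have hG0 : ∀ n, 0 ≤ G n := by
    intro n
    rw [hGdef]
    dsimp only
    split_ifs
    · exact le_rfl
    · exact mul_nonneg hD0 (hu0 _)
  have hGshift : (fun n => G (n + N)) = fun n => D * u n := by
    funext n
    rw [hGdef]
    dsimp only
    rw [if_neg (by omega), Nat.add_sub_cancel]
  have hGsummable : Summable G := by
    apply (summable_nat_add_iff N).mp
    rw [hGshift]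
    exact husum.mul_left D
  have hGtsum : ∑' n, G n ≤ D * (Kr - 1)⁻¹ := by
    have h1 := Summable.sum_add_tsum_nat_add N hGsummable
    have h2 : ∑ i ∈ Finset.range N, G i = 0 := by
      apply Finset.sum_eq_zero
      intro i hi
      rw [hGdef]
      dsimp only
      rw [if_pos (Finset.mem_range.mp hi)]
    have h3 : ∑' n, G (n + N) = D * ∑' k, u k := by
      rw [show (fun n => G (n + N)) = fun n => D * u n from hGshift]
      exact tsum_mul_left
    rw [← h1, h2, zero_add, h3]
    exact mul_le_mul_of_nonneg_left hutsum hD0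
  have hGsummable1 : Summable (fun n => G (n + 1)) := (summable_nat_add_iff 1).mpr hGsummable
  have hGtsum1 : ∑' n, G (n + 1) ≤ ∑' n, G n := by
    have h1 := Summable.sum_add_tsum_nat_add 1 hGsummable
    have h2 : (0:ℝ) ≤ ∑ i ∈ Finset.range 1, G i :=
      Finset.sum_nonneg fun i _ => hG0 i
    linarith
  set FZ : ℤ → ℝ := fun j => G j.natAbs with hFZdef
  have hFnat : (fun n : ℕ => FZ (n : ℤ)) = G := by
    funext n
    simp only [hFZdef, Int.natAbs_natCast]
  have hFneg : (fun n : ℕ => FZ (-((n:ℤ) + 1))) = fun n => G (n + 1) := by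
    funext n
    have hna : ((-((n:ℤ) + 1)).natAbs) = n + 1 := by omega
    simp only [hFZdef, hna]
  have SFZ : Summable FZ :=
    Summable.of_nat_of_neg_add_one (hFnat ▸ hGsummable) (hFneg ▸ hGsummable1)
  have hFtsum : ∑' j : ℤ, FZ j ≤ 2 * (D * (Kr - 1)⁻¹) := by
    rw [tsum_of_nat_of_neg_add_one (hFnat ▸ hGsummable) (hFneg ▸ hGsummable1)]
    have e1 : ∑' n : ℕ, FZ (n : ℤ) = ∑' n, G n := by rw [hFnat]
    have e2 : ∑' n : ℕ, FZ (-((n:ℤ) + 1)) = ∑' n, G (n + 1) := by rw [hFneg]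
    rw [e1, e2]
    linarith
  -- pointwise bound for coordinates of A y
  have hpt : ∀ j : ℤ, ‖(A y : ℤ → ℂ) j‖ ^ ((2:ℝ≥0∞).toReal) ≤ Sv * FZ j := by
    intro j
    rw [htR, Real.rpow_natCast]
    rcases lt_or_ge j.natAbs N with hlt | hge
    · have hcj : c j = 0 := by
        rw [hcdef]
        exact hker j ((hJmem j).mpr hlt)
      have : (A y : ℤ → ℂ) j = 0 := by rw [hAcoord j, hcj, map_zero]
      rw [this]
      have : FZ j = 0 := by
        rw [hFZdef]
        dsimp only
        rw [hGdef]
        dsimp only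
        rw [if_pos hlt]
      rw [this, mul_zero]
      simp
    · have h1 : ‖(A y : ℤ → ℂ) j‖^2 = ‖c j‖^2 := by
        rw [hAcoord j, RCLike.norm_conj]
      have h2 : FZ j = D * u (j.natAbs - N) := by
        rw [hFZdef]
        dsimp only
        rw [hGdef]
        dsimp only
        rw [if_neg (by omega)]
      rw [h1, h2]
      exact est2 j hge
  -- assemble: norm of A y
  have hA2 : ‖A y‖^2 ≤ ‖y‖^2 * εsq := by
    have h0 : ‖A y‖ ^ ((2:ℝ≥0∞).toReal) = ∑' j : ℤ, ‖(A y : ℤ → ℂ) j‖ ^ ((2:ℝ≥0∞).toReal) :=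
      lp.norm_rpow_eq_tsum (by norm_num) (A y)
    have h1 : Summable (fun j : ℤ => ‖(A y : ℤ → ℂ) j‖ ^ ((2:ℝ≥0∞).toReal)) :=
      (lp.memℓp (A y)).summable (by norm_num)
    have h2 : ∑' j : ℤ, ‖(A y : ℤ → ℂ) j‖ ^ ((2:ℝ≥0∞).toReal) ≤ ∑' j : ℤ, Sv * FZ j :=
      Summable.tsum_le_tsum hpt h1 (SFZ.mul_left Sv)
    have h3 : ∑' j : ℤ, Sv * FZ j = Sv * ∑' j, FZ j := tsum_mul_left
    have h4 : ‖A y‖^2 = ‖A y‖ ^ ((2:ℝ≥0∞).toReal) := by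
      rw [htR, Real.rpow_natCast]
    rw [h4, h0, hySv, hεdef]
    calc ∑' j : ℤ, ‖(A y : ℤ → ℂ) j‖ ^ ((2:ℝ≥0∞).toReal) ≤ Sv * ∑' j, FZ j := by
          rw [← h3]; exact h2
      _ ≤ Sv * (2 * (D * (Kr - 1)⁻¹)) := mul_le_mul_of_nonneg_left hFtsum hSv0
  -- main inequality
  have hy4 : ‖y‖^2 ≤ ‖A y‖ * (C * ‖y‖) := by
    have hip : ⟪A y, R y⟫_ℂ = ⟪y, y⟫_ℂ := by
      rw [hAdef, ContinuousLinearMap.adjoint_inner_left, hRy y]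
    have hx : ‖R y‖ ≤ C * ‖y‖ := R.le_opNorm y
    have h1 : ‖y‖^2 = RCLike.re ⟪y, y⟫_ℂ := by
      rw [inner_self_eq_norm_mul_norm]; ring
    have h2 : RCLike.re ⟪A y, R y⟫_ℂ ≤ ‖A y‖ * ‖R y‖ :=
      le_trans (RCLike.re_le_norm _) (norm_inner_le_norm _ _)
    rw [h1, ← hip]
    refine le_trans h2 ?_
    exact mul_le_mul_of_nonneg_left hx (norm_nonneg _)
  -- contradiction
  have hAnn : (0:ℝ) ≤ ‖A y‖ := norm_nonneg _
  have hfin : ‖y‖^2 * ‖y‖^2 < ‖y‖^2 * ‖y‖^2 := by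
    calc ‖y‖^2 * ‖y‖^2 ≤ (‖A y‖ * (C * ‖y‖)) * (‖A y‖ * (C * ‖y‖)) := by
          apply mul_le_mul hy4 hy4 (sq_nonneg _)
          positivity
      _ = ‖A y‖^2 * C^2 * ‖y‖^2 := by ring
      _ ≤ (‖y‖^2 * εsq) * C^2 * ‖y‖^2 := by
          apply mul_le_mul_of_nonneg_right
          · exact mul_le_mul_of_nonneg_right hA2 (sq_nonneg _)
          · exact sq_nonneg _
      _ = (εsq * C^2) * (‖y‖^2 * ‖y‖^2) := by ring
      _ < 1 * (‖y‖^2 * ‖y‖^2) := by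
          apply mul_lt_mul_of_pos_right hsmall
          positivity
      _ = ‖y‖^2 * ‖y‖^2 := one_mul _
  exact absurd hfin (lt_irrefl _)
end

section
/- Let d ≥ 1, δ > 0, and let M : l²(ℤ^d) → l²(ℤ^d) be a bounded linear operator given by a bi-infinite matrix (m_{j'j})_{j',j∈ℤ^d}. Let w : [0,∞) → [0,∞) be nonincreasing with w(x) = o(x^{−d−δ}) as x → ∞. If there exists λ > 1 such that |m_{j'j}| ≤ w(‖λj' − j‖_∞) for all j', j ∈ ℤ^d, then M has no bounded left inverse. (Here λj' − j ∈ ℝ^d and ‖·‖_∞ is the maximum norm.) -/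
open Filter
open scoped ENNReal

lemma aux_sum_int (s : ℝ) (hs : 1 < s) :
    Summable (fun n : ℤ => ((1:ℝ) + |(n:ℝ)|) ^ (-s)) := by
  have h0 : Summable (fun n : ℤ => |(n:ℝ)| ^ (-s) + (if n = 0 then (1:ℝ) else 0)) :=
    (Real.summable_abs_int_rpow hs).add
      (summable_of_ne_finset_zero (s := {(0:ℤ)}) (by intro n hn; simp at hn; simp [hn]))
  refine h0.of_nonneg_of_le (fun n => Real.rpow_nonneg (by positivity) _) ?_
  intro n
  rcases eq_or_ne n 0 with rfl | hn
  · simp [Real.zero_rpow (by linarith : -s ≠ 0)]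
  · have h1 : (0:ℝ) < |(n:ℝ)| := by
      simp only [abs_pos, ne_eq, Int.cast_eq_zero]; exact hn
    have := Real.rpow_le_rpow_of_nonpos h1 (by linarith [abs_nonneg ((n:ℝ))] : |(n:ℝ)| ≤ 1 + |(n:ℝ)|) (by linarith : -s ≤ 0)
    simp [hn]
    linarith

lemma aux_sum_pi (k : ℕ) (s : ℝ) (hs : 1 < s) :
    Summable (fun j : Fin k → ℤ => ∏ i, ((1:ℝ) + |(j i : ℝ)|) ^ (-s)) := by
  induction k with
  | zero => exact summable_of_finite_support (Set.toFinite _)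
  | succ k ih =>
    have h := (aux_sum_int s hs).mul_of_nonneg ih
      (fun n => Real.rpow_nonneg (by positivity) _)
      (fun j => Finset.prod_nonneg fun i _ => Real.rpow_nonneg (by positivity) _)
    have := h.comp_injective (Fin.consEquiv fun _ => ℤ).symm.injective
    refine this.congr fun j => ?_
    simp [Fin.consEquiv, Fin.prod_univ_succ, Fin.tail]

lemma aux_sum_norm (d : ℕ) (hd : 1 ≤ d) (t : ℝ) (ht : (d:ℝ) < t) :
    Summable (fun j : Fin d → ℤ => ‖(fun i => (j i : ℝ))‖ ^ (-t)) := by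
  have hd0 : (0:ℝ) < d := by exact_mod_cast hd
  have ht0 : 0 < t := lt_trans hd0 ht
  have hs : 1 < t / d := by rw [lt_div_iff₀ hd0]; linarith
  have hmaj := (aux_sum_pi d (t/d) hs).mul_left ((2:ℝ) ^ t)
  refine hmaj.of_nonneg_of_le (fun j => Real.rpow_nonneg (norm_nonneg _) _) ?_
  intro j
  rcases eq_or_ne j 0 with rfl | hj
  · have h0 : (fun i => (((0 : Fin d → ℤ) i : ℤ) : ℝ)) = (0 : Fin d → ℝ) := by
      funext i; simp
    rw [h0, norm_zero, Real.zero_rpow (by linarith : -t ≠ 0)]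
    positivity
  · set g : Fin d → ℝ := fun i => (j i : ℝ) with hg
    have ha1 : 1 ≤ ‖g‖ := by
      obtain ⟨i, hi⟩ : ∃ i, j i ≠ 0 := by
        by_contra h; push_neg at h; exact hj (funext h)
      have : (1:ℝ) ≤ |g i| := by
        have : 1 ≤ |j i| := Int.one_le_abs (by exact_mod_cast hi)
        calc (1:ℝ) ≤ (|j i| : ℝ) := by exact_mod_cast this
          _ = |g i| := by simp [hg]
      calc (1:ℝ) ≤ |g i| := this
        _ = ‖g i‖ := (Real.norm_eq_abs _).symm
        _ ≤ ‖g‖ := norm_le_pi_norm g i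
    set a := ‖g‖ with hadef
    have ha0 : (0:ℝ) < a := lt_of_lt_of_le one_pos ha1
    have step1 : a ^ (-t) ≤ 2 ^ t * (1 + a) ^ (-t) := by
      have h2 : (0:ℝ) < (1 + a) / 2 := by linarith
      have hle : (1 + a) / 2 ≤ a := by linarith
      have := Real.rpow_le_rpow_of_nonpos h2 hle (by linarith : -t ≤ 0)
      calc a ^ (-t) ≤ ((1 + a) / 2) ^ (-t) := this
        _ = (1 + a) ^ (-t) / (2:ℝ) ^ (-t) :=
            Real.div_rpow (by linarith) (by norm_num) _
        _ = 2 ^ t * (1 + a) ^ (-t) := by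
            rw [Real.rpow_neg (by norm_num : (0:ℝ) ≤ 2)]
            field_simp
    have step2 : (1 + a) ^ (-t) ≤ ∏ i, ((1:ℝ) + |(j i : ℝ)|) ^ (-(t/d)) := by
      have hP : (0:ℝ) < ∏ i, ((1:ℝ) + |(j i : ℝ)|) :=
        Finset.prod_pos fun i _ => by positivity
      have hPle : ∏ i, ((1:ℝ) + |(j i : ℝ)|) ≤ (1 + a) ^ (d:ℕ) := by
        calc ∏ i, ((1:ℝ) + |(j i : ℝ)|) ≤ ∏ _i : Fin d, (1 + a) := by
              refine Finset.prod_le_prod (fun i _ => by positivity) (fun i _ => ?_)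
              have : |(j i : ℝ)| = ‖g i‖ := by simp [hg]
              have h2 := norm_le_pi_norm g i
              rw [this]; linarith
          _ = (1 + a) ^ (d:ℕ) := by simp
      have hsd : (0:ℝ) < t / d := by positivity
      have key := Real.rpow_le_rpow_of_nonpos hP hPle (by linarith : -(t/(d:ℝ)) ≤ 0)
      calc (1 + a) ^ (-t)
          = ((1 + a) ^ (d:ℕ)) ^ (-(t/d)) := by
            rw [← Real.rpow_natCast (1+a) d, ← Real.rpow_mul (by linarith)]
            congr 1
            field_simp
        _ ≤ (∏ i, ((1:ℝ) + |(j i : ℝ)|)) ^ (-(t/d)) := key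
        _ = ∏ i, ((1:ℝ) + |(j i : ℝ)|) ^ (-(t/d)) :=
            (Real.finset_prod_rpow _ _ (fun i _ => by positivity) _).symm
    calc a ^ (-t) ≤ 2 ^ t * (1 + a) ^ (-t) := step1
      _ ≤ 2 ^ t * ∏ i, ((1:ℝ) + |(j i : ℝ)|) ^ (-(t/d)) := by
          have h2t : (0:ℝ) ≤ 2 ^ t := Real.rpow_nonneg (by norm_num) _
          exact mul_le_mul_of_nonneg_left step2 h2t

set_option maxHeartbeats 2000000 in
/-- A bounded operator on `l²(ℤ^d)` given by a bi-infinite matrix whose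
entries satisfy `|m_{j'j}| ≤ w(‖λj' - j‖_∞)` for a nonincreasing `w` with
`w(x) = o(x^{-d-δ})` and slope `λ > 1` has no bounded left inverse. -/
theorem no_bounded_left_inverse_of_slanted_matrix_decay
    (d : ℕ) (hd : 1 ≤ d) (δ : ℝ) (hδ : 0 < δ)
    (m : (Fin d → ℤ) → (Fin d → ℤ) → ℂ)
    (M : lp (fun _ : Fin d → ℤ => ℂ) 2 →L[ℂ] lp (fun _ : Fin d → ℤ => ℂ) 2)
    (hM : ∀ x : lp (fun _ : Fin d → ℤ => ℂ) 2, ∀ j' : Fin d → ℤ,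
      M x j' = ∑' j : Fin d → ℤ, m j' j * x j)
    (w : ℝ → ℝ) (hw0 : ∀ x : ℝ, 0 ≤ x → 0 ≤ w x)
    (hmono : AntitoneOn w (Set.Ici (0 : ℝ)))
    (hw : Tendsto (fun x : ℝ => w x / x ^ (-(d : ℝ) - δ)) atTop (nhds 0))
    (lam : ℝ) (hlam : 1 < lam)
    (hm : ∀ j' j : Fin d → ℤ,
      ‖m j' j‖ ≤ w ‖fun i => lam * (j' i : ℝ) - (j i : ℝ)‖) :
    ¬ ∃ L : lp (fun _ : Fin d → ℤ => ℂ) 2 →L[ℂ] lp (fun _ : Fin d → ℤ => ℂ) 2,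
      L.comp M = ContinuousLinearMap.id ℂ (lp (fun _ : Fin d → ℤ => ℂ) 2) := by
  rintro ⟨L, hL⟩
  haveI : Nonempty (Fin d) := ⟨⟨0, hd⟩⟩
  have hlam0 : (0:ℝ) < lam := by linarith
  have hlam1 : (0:ℝ) < lam - 1 := by linarith
  -- L is a bounded left inverse
  have hLB : ∀ x : lp (fun _ : Fin d → ℤ => ℂ) 2, ‖x‖ ≤ ‖L‖ * ‖M x‖ := by
    intro x
    have : L (M x) = x := by
      have := congrArg (fun T => T x) hL
      simpa using this
    calc ‖x‖ = ‖L (M x)‖ := by rw [this]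
      _ ≤ ‖L‖ * ‖M x‖ := L.le_opNorm _
  -- constants
  set t : ℝ := (d:ℝ) + 2*δ with ht_def
  have hS : Summable (fun j : Fin d → ℤ => ‖(fun i => (j i : ℝ))‖ ^ (-t)) :=
    aux_sum_norm d hd t (by rw [ht_def]; linarith)
  set S : ℝ := ∑' j : Fin d → ℤ, ‖(fun i => (j i : ℝ))‖ ^ (-t) with hS_def
  have hS0 : 0 ≤ S := tsum_nonneg fun j => Real.rpow_nonneg (norm_nonneg _) _
  set C1 : ℝ := (lam - 1) ^ (-(2*(d:ℝ)+2*δ)) with hC1_def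
  have hC1 : 0 < C1 := Real.rpow_pos_of_pos hlam1 _
  set C0 : ℝ := ‖L‖^2 * 3^d * C1 * S with hC0_def
  have hC00 : 0 ≤ C0 := by positivity
  set ε : ℝ := min 1 (1/(1+C0)) with hε_def
  have hε : 0 < ε := lt_min one_pos (by positivity)
  have hεC : C0 * ε^2 < 1 := by
    have h1 : ε ≤ 1 := min_le_left _ _
    have h2 : ε ≤ 1/(1+C0) := min_le_right _ _
    have h3 : C0 * ε ≤ C0 * (1/(1+C0)) := mul_le_mul_of_nonneg_left h2 hC00
    have h4 : C0 * (1/(1+C0)) < 1 := by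
      rw [mul_one_div, div_lt_one (by linarith)]; linarith
    nlinarith [mul_nonneg hC00 hε.le]
  -- threshold from the o() hypothesis
  obtain ⟨X₀, hX₀⟩ := eventually_atTop.mp
    ((hw.eventually (gt_mem_nhds hε)).and (eventually_ge_atTop (1:ℝ)))
  have hwb : ∀ y : ℝ, X₀ ≤ y → w y ≤ ε * y ^ (-(d:ℝ) - δ) := by
    intro y hy
    obtain ⟨h1, h2⟩ := hX₀ y hy
    have hypos : (0:ℝ) < y := by linarith
    have hpos : 0 < y ^ (-(d:ℝ) - δ) := Real.rpow_pos_of_pos hypos _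
    have := (div_lt_iff₀ hpos).mp h1
    linarith
  -- the size parameter
  set N : ℕ := max 1 ⌈X₀ / (lam - 1)⌉₊ with hN_def
  have hN1 : 1 ≤ N := le_max_left _ _
  have hN1R : (1:ℝ) ≤ N := by exact_mod_cast hN1
  have hNpos : (0:ℝ) < N := by linarith
  have hNX : X₀ ≤ (lam - 1) * N := by
    have h1 : X₀ / (lam - 1) ≤ (⌈X₀ / (lam - 1)⌉₊ : ℝ) := Nat.le_ceil _
    have h2 : ((⌈X₀ / (lam - 1)⌉₊ : ℕ) : ℝ) ≤ (N : ℝ) := by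
      exact_mod_cast le_max_right 1 ⌈X₀ / (lam - 1)⌉₊
    have := h1.trans h2
    rw [div_le_iff₀ hlam1] at this
    linarith [this]
  -- the two cubes
  set S1 : Finset (Fin d → ℤ) := Finset.Icc (fun _ => -(N:ℤ)) (fun _ => (N:ℤ)) with hS1_def
  set S2 : Finset (Fin d → ℤ) := Finset.Icc (fun _ => -((N:ℤ)-1)) (fun _ => (N:ℤ)-1) with hS2_def
  have card1 : S1.card = (2*N+1)^d := by
    rw [hS1_def, Pi.card_Icc]
    simp only [Int.card_Icc]
    rw [Finset.prod_const, Finset.card_univ, Fintype.card_fin]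
    congr 1
    omega
  have card2 : S2.card = (2*N-1)^d := by
    rw [hS2_def, Pi.card_Icc]
    simp only [Int.card_Icc]
    rw [Finset.prod_const, Finset.card_univ, Fintype.card_fin]
    congr 1
    omega
  have hlt : S2.card < S1.card := by
    rw [card1, card2]
    exact Nat.pow_lt_pow_left (by omega) (by omega)
  -- membership facts
  have hS1mem : ∀ j ∈ S1, ∀ i, |j i| ≤ (N:ℤ) := by
    intro j hj i
    rw [hS1_def, Finset.mem_Icc] at hj
    have h1 := hj.1 i
    have h2 := hj.2 i
    simp only at h1 h2
    rw [abs_le]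
    exact ⟨h1, h2⟩
  have hS2mem : ∀ j' : Fin d → ℤ, j' ∉ S2 → ∃ i, (N:ℤ) ≤ |j' i| := by
    intro j' hj'
    by_contra h
    push_neg at h
    apply hj'
    rw [hS2_def, Finset.mem_Icc, Pi.le_def, Pi.le_def]
    constructor <;> intro i <;> have := abs_lt.mp (h i) <;> omega
  -- norms
  set nrm : (Fin d → ℤ) → ℝ := fun j => ‖(fun i => (j i : ℝ))‖ with hnrm_def
  have hnrm0 : ∀ j, 0 ≤ nrm j := fun j => norm_nonneg _
  have hnrm_ge : ∀ (j : Fin d → ℤ) (i : Fin d), |(j i : ℝ)| ≤ nrm j := by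
    intro j i
    simpa [Real.norm_eq_abs] using norm_le_pi_norm (fun i => (j i : ℝ)) i
  have hmax : ∀ j : Fin d → ℤ, ∃ i₀, nrm j ≤ |(j i₀ : ℝ)| := by
    intro j
    obtain ⟨i₀, -, hi₀⟩ := Finset.exists_max_image Finset.univ (fun i => |j i|)
      ⟨⟨0, hd⟩, Finset.mem_univ _⟩
    refine ⟨i₀, ?_⟩
    rw [hnrm_def]
    refine (pi_norm_le_iff_of_nonneg (abs_nonneg _)).mpr fun i => ?_
    rw [Real.norm_eq_abs, ← Int.cast_abs, ← Int.cast_abs]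
    exact_mod_cast hi₀ i (Finset.mem_univ i)
  -- slant bound
  have h_slant : ∀ j ∈ S1, ∀ j' : Fin d → ℤ,
      lam * nrm j' - N ≤ ‖fun i => lam * (j' i : ℝ) - (j i : ℝ)‖ := by
    intro j hj j'
    obtain ⟨i₀, hi₀⟩ := hmax j'
    have hji₀ : |(j i₀ : ℝ)| ≤ (N:ℝ) := by
      rw [← Int.cast_abs]
      exact_mod_cast hS1mem j hj i₀
    have e1 : lam * nrm j' - N ≤ lam * |(j' i₀ : ℝ)| - |(j i₀ : ℝ)| := by
      have := mul_le_mul_of_nonneg_left hi₀ hlam0.le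
      linarith
    have e2 : lam * |(j' i₀ : ℝ)| - |(j i₀ : ℝ)| ≤ |lam * (j' i₀ : ℝ) - (j i₀ : ℝ)| := by
      have h := abs_sub_abs_le_abs_sub (lam * (j' i₀ : ℝ)) ((j i₀ : ℝ))
      rw [abs_mul, abs_of_pos hlam0] at h
      linarith
    have e3 : |lam * (j' i₀ : ℝ) - (j i₀ : ℝ)| ≤ ‖fun i => lam * (j' i : ℝ) - (j i : ℝ)‖ := by
      simpa [Real.norm_eq_abs] using
        norm_le_pi_norm (fun i => lam * (j' i : ℝ) - (j i : ℝ)) i₀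
    linarith
  -- entry bound for relevant blocks
  have h_m_bound : ∀ j ∈ S1, ∀ j' : Fin d → ℤ, j' ∉ S2 →
      ‖m j' j‖ ≤ w ((lam - 1) * nrm j') := by
    intro j hj j' hj'
    obtain ⟨i, hi⟩ := hS2mem j' hj'
    have hn : (N:ℝ) ≤ nrm j' := by
      refine le_trans ?_ (hnrm_ge j' i)
      rw [← Int.cast_abs]
      exact_mod_cast hi
    have h1 : (lam - 1) * nrm j' ≤ ‖fun i => lam * (j' i : ℝ) - (j i : ℝ)‖ := by
      have := h_slant j hj j'
      nlinarith [hnrm0 j']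
    have h2 := hmono (Set.mem_Ici.mpr (by positivity : (0:ℝ) ≤ (lam - 1) * nrm j'))
      (Set.mem_Ici.mpr (norm_nonneg _)) h1
    exact (hm j' j).trans h2
  -- w bound for relevant rows
  have h_w_bound : ∀ j' : Fin d → ℤ, j' ∉ S2 →
      (w ((lam - 1) * nrm j'))^2 ≤ ε^2 * C1 * (N:ℝ)^(-(d:ℝ)) * (nrm j') ^ (-t) := by
    intro j' hj'
    obtain ⟨i, hi⟩ := hS2mem j' hj'
    have hy : (N:ℝ) ≤ nrm j' := by
      refine le_trans ?_ (hnrm_ge j' i)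
      rw [← Int.cast_abs]
      exact_mod_cast hi
    set y := nrm j' with hy_def
    have hy0 : (0:ℝ) < y := lt_of_lt_of_le hNpos hy
    have hz0 : (0:ℝ) < (lam - 1) * y := by positivity
    have hX : X₀ ≤ (lam - 1) * y :=
      hNX.trans (mul_le_mul_of_nonneg_left hy hlam1.le)
    have hwy := hwb _ hX
    have hsq : (w ((lam - 1) * y))^2 ≤ ε^2 * (((lam - 1) * y) ^ (-(d:ℝ) - δ))^2 := by
      have h0 := hw0 _ hz0.le
      calc (w ((lam - 1) * y))^2 ≤ (ε * ((lam - 1) * y) ^ (-(d:ℝ) - δ))^2 :=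
            pow_le_pow_left₀ h0 hwy 2
        _ = ε^2 * (((lam - 1) * y) ^ (-(d:ℝ) - δ))^2 := mul_pow _ _ 2
    have hrw : (((lam - 1) * y) ^ (-(d:ℝ) - δ))^2 = ((lam - 1) * y) ^ (-(2*(d:ℝ)+2*δ)) := by
      rw [← Real.rpow_natCast (((lam - 1) * y) ^ (-(d:ℝ) - δ)) 2,
        ← Real.rpow_mul hz0.le]
      norm_num
      ring_nf
    have hmulrw : ((lam - 1) * y) ^ (-(2*(d:ℝ)+2*δ)) = C1 * y ^ (-(2*(d:ℝ)+2*δ)) := by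
      rw [Real.mul_rpow hlam1.le hy0.le, hC1_def]
    have hysplit : y ^ (-(2*(d:ℝ)+2*δ)) = y ^ (-(d:ℝ)) * y ^ (-t) := by
      rw [← Real.rpow_add hy0, ht_def]
      ring_nf
    have hyN : y ^ (-(d:ℝ)) ≤ (N:ℝ) ^ (-(d:ℝ)) :=
      Real.rpow_le_rpow_of_nonpos hNpos hy (neg_nonpos.mpr (Nat.cast_nonneg d))
    calc (w ((lam - 1) * y))^2 ≤ ε^2 * (((lam - 1) * y) ^ (-(d:ℝ) - δ))^2 := hsq
      _ = ε^2 * (C1 * (y ^ (-(d:ℝ)) * y ^ (-t))) := by rw [hrw, hmulrw, hysplit]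
      _ ≤ ε^2 * (C1 * ((N:ℝ) ^ (-(d:ℝ)) * y ^ (-t))) :=
          mul_le_mul_of_nonneg_left (mul_le_mul_of_nonneg_left
            (mul_le_mul_of_nonneg_right hyN (Real.rpow_nonneg hy0.le _)) hC1.le) (sq_nonneg ε)
      _ = ε^2 * C1 * (N:ℝ)^(-(d:ℝ)) * y ^ (-t) := by ring
  -- the kernel vector
  let φ : ((↥S1) → ℂ) →ₗ[ℂ] ((↥S2) → ℂ) :=
    { toFun := fun a j' => ∑ j : ↥S1, m (j' : Fin d → ℤ) (j : Fin d → ℤ) * a j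
      map_add' := by
        intro a b; funext j'
        simp [mul_add, Finset.sum_add_distrib]
      map_smul' := by
        intro c a; funext j'
        simp only [Pi.smul_apply, smul_eq_mul, RingHom.id_apply]
        rw [Finset.mul_sum]
        exact Finset.sum_congr rfl fun j _ => by ring }
  have hrank : Module.finrank ℂ ((↥S2) → ℂ) < Module.finrank ℂ ((↥S1) → ℂ) := by
    simpa [Module.finrank_fintype_fun_eq_card, Fintype.card_coe] using hlt
  obtain ⟨a, hamem, ha0⟩ := (Submodule.ne_bot_iff _).mp
    (LinearMap.ker_ne_bot_of_finrank_lt (f := φ) hrank)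
  have haφ : ∀ j' : ↥S2, ∑ j : ↥S1, m (j' : Fin d → ℤ) (j : Fin d → ℤ) * a j = 0 := by
    intro j'
    exact congrFun (LinearMap.mem_ker.mp hamem) j'
  -- the test vector in lp
  set aF : (Fin d → ℤ) → ℂ := fun j => if h : j ∈ S1 then a ⟨j, h⟩ else 0 with haF_def
  have haF0 : ∀ j ∉ S1, aF j = 0 := fun j hj => dif_neg hj
  have haFS : ∀ j : ↥S1, aF (j : Fin d → ℤ) = a j := by
    intro j
    rw [haF_def]
    simp only [dif_pos j.2]
  have hp2 : (0:ℝ) < (2:ℝ≥0∞).toReal := by norm_num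
  have rpow2 : ∀ r : ℝ, r ^ ((2:ℝ≥0∞).toReal) = r ^ 2 := by
    intro r
    rw [show ((2:ℝ≥0∞)).toReal = ((2:ℕ):ℝ) by norm_num, Real.rpow_natCast]
  have hmem : Memℓp aF 2 := by
    apply memℓp_gen
    apply summable_of_ne_finset_zero (s := S1)
    intro j hj
    rw [haF0 j hj, norm_zero]
    exact Real.zero_rpow (by norm_num)
  set x : lp (fun _ : Fin d → ℤ => ℂ) 2 := ⟨aF, hmem⟩ with hx_def
  have hxcoe : ∀ j, x j = aF j := fun j => rfl
  set A : ℝ := ∑ j : ↥S1, ‖a j‖^2 with hA_def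
  have hApos : 0 < A := by
    obtain ⟨j₀, hj₀⟩ := Function.ne_iff.mp ha0
    exact Finset.sum_pos' (fun j _ => sq_nonneg _)
      ⟨j₀, Finset.mem_univ _, pow_pos (norm_pos_iff.mpr hj₀) 2⟩
  have hx2 : ‖x‖^2 = A := by
    calc ‖x‖^2 = ∑' j, ‖x j‖^2 := by
          simpa only [rpow2] using lp.norm_rpow_eq_tsum hp2 x
      _ = ∑ j ∈ S1, ‖aF j‖^2 := by
          refine tsum_eq_sum fun j hj => ?_
          rw [hxcoe, haF0 j hj, norm_zero]
          ring
      _ = ∑ j : ↥S1, ‖aF (j : Fin d → ℤ)‖^2 := (Finset.sum_coe_sort S1 _).symm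
      _ = A := by
          rw [hA_def]
          exact Finset.sum_congr rfl fun j _ => by rw [haFS]
  have hMx : ∀ j' : Fin d → ℤ, M x j' = ∑ j : ↥S1, m j' (j : Fin d → ℤ) * a j := by
    intro j'
    rw [hM x j']
    calc (∑' j, m j' j * x j) = ∑ j ∈ S1, m j' j * x j := by
          refine tsum_eq_sum fun j hj => ?_
          rw [hxcoe, haF0 j hj, mul_zero]
      _ = ∑ j : ↥S1, m j' (j : Fin d → ℤ) * x (j : Fin d → ℤ) :=
          (Finset.sum_coe_sort S1 _).symm
      _ = ∑ j : ↥S1, m j' (j : Fin d → ℤ) * a j := by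
          refine Finset.sum_congr rfl fun j _ => ?_
          rw [hxcoe, haFS]
  have hker : ∀ j' ∈ S2, M x j' = 0 := by
    intro j' hj'
    rw [hMx j']
    exact haφ ⟨j', hj'⟩
  have hsum1 : Summable (fun j' : Fin d → ℤ => ‖M x j'‖^2) :=
    ((lp.memℓp (M x)).summable hp2).congr (fun j' => rpow2 _)
  set G : (Fin d → ℤ) → ℝ := fun j' => if j' ∈ S2 then 0 else (w ((lam - 1) * nrm j'))^2
    with hG_def
  set c2 : ℝ := ε^2 * C1 * (N:ℝ)^(-(d:ℝ)) with hc2_def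
  have hc20 : 0 ≤ c2 := by
    rw [hc2_def]
    positivity
  have hGle : ∀ j', G j' ≤ c2 * (nrm j') ^ (-t) := by
    intro j'
    by_cases hj' : j' ∈ S2
    · rw [hG_def]
      simp only [if_pos hj']
      exact mul_nonneg hc20 (Real.rpow_nonneg (hnrm0 j') _)
    · rw [hG_def]
      simp only [if_neg hj']
      calc (w ((lam - 1) * nrm j'))^2 ≤ ε^2 * C1 * (N:ℝ)^(-(d:ℝ)) * (nrm j') ^ (-t) :=
            h_w_bound j' hj'
        _ = c2 * (nrm j') ^ (-t) := by rw [hc2_def]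
  have hGnonneg : ∀ j', 0 ≤ G j' := by
    intro j'
    rw [hG_def]
    by_cases hj' : j' ∈ S2
    · simp [hj']
    · simp only [if_neg hj']
      exact sq_nonneg _
  have hSsum' : Summable (fun j' : Fin d → ℤ => c2 * (nrm j') ^ (-t)) := hS.mul_left c2
  have hGsum : Summable G := hSsum'.of_nonneg_of_le hGnonneg hGle
  have htsumG : ∑' j', G j' ≤ c2 * S := by
    calc ∑' j', G j' ≤ ∑' j', c2 * (nrm j') ^ (-t) := Summable.tsum_le_tsum hGle hGsum hSsum'
      _ = c2 * ∑' j', (nrm j') ^ (-t) := tsum_mul_left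
      _ = c2 * S := by rw [hS_def]
  have hMx_pt : ∀ j', ‖M x j'‖^2 ≤ (S1.card : ℝ) * A * G j' := by
    intro j'
    by_cases hj' : j' ∈ S2
    · rw [hker j' hj', hG_def]
      simp [hj']
    · rw [hMx j']
      have h1 : ‖∑ j : ↥S1, m j' (j : Fin d → ℤ) * a j‖ ≤
          ∑ j : ↥S1, ‖m j' (j : Fin d → ℤ)‖ * ‖a j‖ := by
        refine (norm_sum_le _ _).trans (le_of_eq ?_)
        exact Finset.sum_congr rfl fun j _ => norm_mul _ _
      have h2 := Finset.sum_mul_sq_le_sq_mul_sq Finset.univ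
        (fun j : ↥S1 => ‖m j' (j : Fin d → ℤ)‖) (fun j : ↥S1 => ‖a j‖)
      rw [← hA_def] at h2
      have h3 : ∑ j : ↥S1, ‖m j' (j : Fin d → ℤ)‖^2 ≤
          (S1.card : ℝ) * (w ((lam - 1) * nrm j'))^2 := by
        have hb : ∀ j : ↥S1, ‖m j' (j : Fin d → ℤ)‖^2 ≤ (w ((lam - 1) * nrm j'))^2 := by
          intro j
          refine pow_le_pow_left₀ (norm_nonneg _) ?_ 2
          exact h_m_bound _ j.2 j' hj'
        calc ∑ j : ↥S1, ‖m j' (j : Fin d → ℤ)‖^2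
            ≤ ∑ _j : ↥S1, (w ((lam - 1) * nrm j'))^2 :=
              Finset.sum_le_sum fun j _ => hb j
          _ = (Fintype.card ↥S1 : ℝ) * (w ((lam - 1) * nrm j'))^2 := by
              rw [Finset.sum_const, Finset.card_univ, nsmul_eq_mul]
          _ = (S1.card : ℝ) * (w ((lam - 1) * nrm j'))^2 := by rw [Fintype.card_coe]
      have hG' : G j' = (w ((lam - 1) * nrm j'))^2 := by
        rw [hG_def]
        simp only [if_neg hj']
      calc ‖∑ j : ↥S1, m j' (j : Fin d → ℤ) * a j‖^2
          ≤ (∑ j : ↥S1, ‖m j' (j : Fin d → ℤ)‖ * ‖a j‖)^2 :=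
            pow_le_pow_left₀ (norm_nonneg _) h1 2
        _ ≤ (∑ j : ↥S1, ‖m j' (j : Fin d → ℤ)‖^2) * A := h2
        _ ≤ ((S1.card : ℝ) * (w ((lam - 1) * nrm j'))^2) * A :=
            mul_le_mul_of_nonneg_right h3 hApos.le
        _ = (S1.card : ℝ) * A * G j' := by rw [hG']; ring
  have hMxnorm : ‖M x‖^2 = ∑' j', ‖M x j'‖^2 := by
    simpa only [rpow2] using lp.norm_rpow_eq_tsum hp2 (M x)
  have hMx2 : ‖M x‖^2 ≤ (S1.card : ℝ) * A * (c2 * S) := by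
    rw [hMxnorm]
    calc ∑' j', ‖M x j'‖^2 ≤ ∑' j', (S1.card : ℝ) * A * G j' :=
          Summable.tsum_le_tsum hMx_pt hsum1 (hGsum.mul_left _)
      _ = (S1.card : ℝ) * A * ∑' j', G j' := tsum_mul_left
      _ ≤ (S1.card : ℝ) * A * (c2 * S) := by
          refine mul_le_mul_of_nonneg_left htsumG ?_
          exact mul_nonneg (Nat.cast_nonneg _) hApos.le
  have hcardN : (S1.card : ℝ) * (N:ℝ)^(-(d:ℝ)) ≤ 3^d := by
    have h1 : ((S1.card : ℕ) : ℝ) ≤ 3^d * (N:ℝ)^(d:ℕ) := by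
      rw [card1]
      push_cast
      calc ((2*(N:ℝ)+1))^d ≤ (3*(N:ℝ))^d :=
            pow_le_pow_left₀ (by positivity) (by linarith) d
        _ = 3^d * (N:ℝ)^d := mul_pow _ _ d
    have h2 : (N:ℝ)^(d:ℕ) * (N:ℝ)^(-(d:ℝ)) = 1 := by
      rw [← Real.rpow_natCast (N:ℝ) d, ← Real.rpow_add hNpos]
      simp
    calc (S1.card : ℝ) * (N:ℝ)^(-(d:ℝ))
        ≤ (3^d * (N:ℝ)^(d:ℕ)) * (N:ℝ)^(-(d:ℝ)) :=
          mul_le_mul_of_nonneg_right h1 (Real.rpow_nonneg hNpos.le _)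
      _ = 3^d * ((N:ℝ)^(d:ℕ) * (N:ℝ)^(-(d:ℝ))) := by ring
      _ = 3^d := by rw [h2, mul_one]
  have hnn : (0:ℝ) ≤ ‖L‖^2 * ε^2 * C1 * S * A :=
    mul_nonneg (mul_nonneg (mul_nonneg (mul_nonneg (sq_nonneg _) (sq_nonneg _)) hC1.le) hS0)
      hApos.le
  have hchain : A ≤ C0 * ε^2 * A := by
    calc A = ‖x‖^2 := hx2.symm
      _ ≤ (‖L‖ * ‖M x‖)^2 := pow_le_pow_left₀ (norm_nonneg x) (hLB x) 2
      _ = ‖L‖^2 * ‖M x‖^2 := mul_pow _ _ 2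
      _ ≤ ‖L‖^2 * ((S1.card : ℝ) * A * (c2 * S)) :=
          mul_le_mul_of_nonneg_left hMx2 (sq_nonneg _)
      _ = (‖L‖^2 * ε^2 * C1 * S * A) * ((S1.card : ℝ) * (N:ℝ)^(-(d:ℝ))) := by
          rw [hc2_def]; ring
      _ ≤ (‖L‖^2 * ε^2 * C1 * S * A) * 3^d := mul_le_mul_of_nonneg_left hcardN hnn
      _ = C0 * ε^2 * A := by rw [hC0_def]; ring
  have hlast : C0 * ε^2 * A < 1 * A := mul_lt_mul_of_pos_right hεC hApos
  linarith
end
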